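/- Let L be a Leibniz algebra over F, (l,r,V) a representation of L, A a subspace of L, and x an element of the normalizer n_L(A). Then for all integers k, p ≥ 0 one has the inclusion of subspaces of End(V): ((r_A)^p r_x^k) r_A ⊆ (r_A)^{p+1} r_x^k + (r_A)^{p+1} r_x^{k-1} + ⋯ + (r_A)^{p+1} r_x + (r_A)^{p+1}. -/
import Mathlib


/-- Let `(l,r,V)` be a representation of a Leibniz algebra `L`,
`A` a subspace of `L` and `x ∈ n_L(A)`.  Then for all `k, p ≥ 0`:
`((r_A)^p r_x^k) r_A ⊆ (r_A)^{p+1} r_x^k + ⋯ + (r_A)^{p+1} r_x + (r_A)^{p+1}`,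
where `r_A = A.map r`, products of subspaces of `End(V)` are spans of
compositions, and `S r_x^j` is the span of `{s ∘ r_x^j : s ∈ S}`. -/
theorem pow_mul_subset
    (F L V : Type*) [Field F]
    [AddCommGroup L] [Module F L]
    [AddCommGroup V] [Module F V]
    (b : L →ₗ[F] L →ₗ[F] L)
    (hb : ∀ x y z : L, b x (b y z) = b (b x y) z - b (b x z) y)
    (l r : L →ₗ[F] Module.End F V)
    (hr : ∀ x y : L, r (b x y) = r y * r x - r x * r y)
    (hlr : ∀ x y : L, l (b x y) = r y * l x - l x * r y)
    (hll : ∀ x y : L, l (b x y) = r y * l x + l x * l y)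
    (A : Submodule F L) (x : L)
    (hx : ∀ a ∈ A, b x a ∈ A ∧ b a x ∈ A) :
    ∀ (k p : ℕ),
      ((A.map r) ^ p * Submodule.span F {(r x) ^ k}) * A.map r ≤
        ⨆ j ∈ Finset.range (k + 1),
          (A.map r) ^ (p + 1) * Submodule.span F {(r x) ^ j} := by
  -- Key lemma: `r_x^k ∘ r_a` lies in the span of `r_A r_x^j`, `j ≤ k`.
  have key : ∀ k : ℕ, ∀ a ∈ A, (r x) ^ k * r a ∈
      ⨆ j ∈ Finset.range (k + 1), (A.map r) * Submodule.span F {(r x) ^ j} := by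
    intro k
    induction k with
    | zero =>
      intro a ha
      apply Submodule.mem_iSup_of_mem 0
      apply Submodule.mem_iSup_of_mem (by simp)
      have h : r a * (r x) ^ 0 ∈ (A.map r) * Submodule.span F {(r x) ^ 0} :=
        Submodule.mul_mem_mul ⟨a, ha, rfl⟩ (Submodule.subset_span rfl)
      simpa using h
    | succ k ih =>
      intro a ha
      have hxa : r x * r a = r a * r x - r (b x a) := by
        rw [hr x a]; abel
      have step : (r x) ^ (k + 1) * r a
          = ((r x) ^ k * r a) * r x - (r x) ^ k * r (b x a) := by
        rw [pow_succ, mul_assoc, hxa, mul_sub, ← mul_assoc]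
      rw [step]
      have incl : ∀ j, Submodule.map (LinearMap.mulRight F (r x))
          ((A.map r) * Submodule.span F {(r x) ^ j})
          ≤ (A.map r) * Submodule.span F {(r x) ^ (j + 1)} := by
        intro j
        rw [Submodule.map_le_iff_le_comap]
        intro y hy
        simp only [Submodule.mem_comap, LinearMap.mulRight_apply]
        have h : y * r x ∈ ((A.map r) * Submodule.span F {(r x) ^ j})
            * Submodule.span F {r x} :=
          Submodule.mul_mem_mul hy (Submodule.subset_span rfl)
        rwa [mul_assoc, Submodule.span_mul_span, Set.singleton_mul_singleton,
          ← pow_succ] at h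
      have h1 : ((r x) ^ k * r a) * r x ∈
          ⨆ j ∈ Finset.range (k + 2), (A.map r) * Submodule.span F {(r x) ^ j} := by
        have h := Submodule.mem_map_of_mem (f := LinearMap.mulRight F (r x)) (ih a ha)
        simp only [Submodule.map_iSup] at h
        refine (iSup₂_le fun j hj => (incl j).trans
          (le_iSup₂_of_le (j + 1) ?_ le_rfl)) h
        simp only [Finset.mem_range] at hj ⊢
        omega
      have h2 : (r x) ^ k * r (b x a) ∈
          ⨆ j ∈ Finset.range (k + 2), (A.map r) * Submodule.span F {(r x) ^ j} := by
        have hle : (⨆ j ∈ Finset.range (k + 1),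
            (A.map r) * Submodule.span F {(r x) ^ j}) ≤
            ⨆ j ∈ Finset.range (k + 2), (A.map r) * Submodule.span F {(r x) ^ j} :=
          biSup_mono fun j hj => by
            simp only [Finset.mem_range] at hj ⊢; omega
        exact hle (ih (b x a) (hx a ha).1)
      exact sub_mem h1 h2
  intro k p
  rw [Submodule.mul_le]
  intro f hf g hg
  obtain ⟨a, ha, rfl⟩ := hg
  refine Submodule.mul_induction_on hf ?_ ?_
  · intro m hm n hn
    obtain ⟨c, rfl⟩ := Submodule.mem_span_singleton.1 hn
    have incl : ∀ j, Submodule.map (LinearMap.mulLeft F m)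
        ((A.map r) * Submodule.span F {(r x) ^ j})
        ≤ (A.map r) ^ (p + 1) * Submodule.span F {(r x) ^ j} := by
      intro j
      rw [Submodule.map_le_iff_le_comap]
      intro y hy
      simp only [Submodule.mem_comap, LinearMap.mulLeft_apply]
      rw [Submodule.pow_succ, mul_assoc]
      exact Submodule.mul_mem_mul hm hy
    have hmem : m * ((r x) ^ k * r a) ∈
        ⨆ j ∈ Finset.range (k + 1), (A.map r) ^ (p + 1) * Submodule.span F {(r x) ^ j} := by
      have h := Submodule.mem_map_of_mem (f := LinearMap.mulLeft F m) (key k a ha)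
      simp only [Submodule.map_iSup] at h
      exact (iSup₂_le fun j hj => (incl j).trans (le_iSup₂_of_le j hj le_rfl)) h
    have heq : m * (c • (r x) ^ k) * r a = c • (m * ((r x) ^ k * r a)) := by
      rw [mul_smul_comm, smul_mul_assoc, mul_assoc]
    rw [heq]
    exact Submodule.smul_mem _ c hmem
  · intro y z hy hz
    rw [add_mul]
    exact add_mem hy hz
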